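/- Let E and F be cartesian closed categories with finite limits, and let f_! ⊣ f^* ⊣ f_* be an adjoint triple with f^* : E ⥤ F preserving finite limits and cartesian closed. Then for all objects Y and B of E, every object X of F and every morphism x : X ⟶ f^*(B), the comparison map θ for the product projection π : Y ⨯ B ⟶ B, namely f_!(X ×_{f^*(B)} f^*(Y ⨯ B)) ⟶ f_!(X) ×_B (Y ⨯ B), is an isomorphism. -/

import Mathlib

open CategoryTheory CategoryTheory.Limits

/-- A subobject classifier for a category `C` with a terminal object:
an object `Ω` together with a "truth" arrow `⊤_ C ⟶ Ω` such that every
monomorphism arises as the pullback of `truth` along a unique classifying map. -/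
structure Classifier (C : Type*) [Category C] [HasTerminal C] where
  Ω : C
  truth : ⊤_ C ⟶ Ω
  χ : ∀ {U A : C} (m : U ⟶ A) [Mono m], A ⟶ Ω
  isPullback : ∀ {U A : C} (m : U ⟶ A) [Mono m],
    IsPullback m (terminal.from U) (χ m) truth
  uniq : ∀ {U A : C} (m : U ⟶ A) [Mono m] (χ' : A ⟶ Ω),
    IsPullback m (terminal.from U) χ' truth → χ' = χ m

/-- `C` has a subobject classifier. -/
class HasClassifier (C : Type*) [Category C] [HasTerminal C] : Prop where
  nonempty : Nonempty (_root_.Classifier C)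

/-- Given an adjunction `fShriek ⊣ fStar` (thought of as `f_! ⊣ f^*` for an essential
geometric morphism `f`), a morphism `a : A ⟶ B` in the codomain, an object `X` of the
domain and a morphism `x : X ⟶ f^* B`, this is the comparison map
`θ : f_!(X ×_{f^* B} f^* A) ⟶ f_!(X) ×_B A`, whose first component is `f_!` of the first
pullback projection, and whose second component is `f_!` of the second pullback projection
followed by the counit `f_!(f^* A) ⟶ A`.  Here `f_!(X) ⟶ B` is the adjunct of `x`.
The geometric morphism `f` is locally connected precisely if all these maps are
isomorphisms. -/
noncomputable def thetaMap {F : Type*} {E : Type*} [Category F] [Category E]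
    [HasPullbacks E] [HasPullbacks F]
    (fShriek : F ⥤ E) (fStar : E ⥤ F) (adj : fShriek ⊣ fStar)
    {A B : E} (a : A ⟶ B) (X : F) (x : X ⟶ fStar.obj B) :
    fShriek.obj (pullback x (fStar.map a)) ⟶ pullback ((adj.homEquiv X B).symm x) a :=
  pullback.lift (fShriek.map (pullback.fst x (fStar.map a)))
    (fShriek.map (pullback.snd x (fStar.map a)) ≫ adj.counit.app A)
    (by
      have h := adj.counit.naturality a
      simp only [Functor.comp_map, Functor.id_map] at h
      rw [Adjunction.homEquiv_counit, ← Functor.map_comp_assoc, pullback.condition,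
        Functor.map_comp_assoc, Category.assoc, ← h])

universe v u₁ u₂

open CartesianMonoidalCategory MonoidalCategory

attribute [local simp] prod.lift_fst prod.lift_snd prod.lift_fst_assoc prod.lift_snd_assoc pullback.lift_fst pullback.lift_snd pullback.lift_fst_assoc pullback.lift_snd_assoc

/-- Let `E` and `F` be cartesian closed categories with finite limits,
and `f_! ⊣ f^* ⊣ f_*` an adjoint triple with `f^* : E ⥤ F` preserving finite limits and
cartesian closed.  Then for all objects `Y, B` of `E`, every object `X` of `F` and every
`x : X ⟶ f^* B`, the comparison map `θ` for the product projection `π : Y ⨯ B ⟶ B`,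
namely `f_!(X ×_{f^* B} f^*(Y ⨯ B)) ⟶ f_!(X) ×_B (Y ⨯ B)`, is an isomorphism. -/
theorem theta_isIso_of_prod_projection
    {E : Type u₁} [Category.{v} E] [HasFiniteLimits E]
    [CartesianMonoidalCategory E] [MonoidalClosed E]
    {F : Type u₂} [Category.{v} F] [HasFiniteLimits F]
    [CartesianMonoidalCategory F] [MonoidalClosed F]
    (fShriek : F ⥤ E) (fStar : E ⥤ F) (fPush : F ⥤ E)
    [PreservesFiniteLimits fStar] [MonoidalClosedFunctor fStar]
    (adj₁ : fShriek ⊣ fStar) (adj₂ : fStar ⊣ fPush)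
    (Y B : E) (X : F) (x : X ⟶ fStar.obj B) :
    IsIso (thetaMap fShriek fStar adj₁ (prod.snd : Y ⨯ B ⟶ B) X x) := by
  haveI : IsIso (expComparison fStar Y).natTrans := MonoidalClosedFunctor.comparison_iso Y
  haveI hF : IsIso (frobeniusMorphism fStar adj₁ Y).natTrans :=
    frobeniusMorphism_iso_of_expComparison_iso fStar adj₁ Y
  let φ : fShriek.obj (fStar.obj Y ⊗ X) ⟶ Y ⊗ fShriek.obj X :=
    (frobeniusMorphism fStar adj₁ Y).natTrans.app X
  haveI hφ : IsIso φ := inferInstance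
  let g : fShriek.obj X ⟶ B := (adj₁.homEquiv X B).symm x
  have hg : g = fShriek.map x ≫ adj₁.counit.app B := by simp [g, Adjunction.homEquiv_counit]
  let v : pullback x (fStar.map (prod.snd : Y ⨯ B ⟶ B)) ⟶ fStar.obj Y ⊗ X :=
    CartesianMonoidalCategory.lift (pullback.snd x (fStar.map prod.snd) ≫ fStar.map prod.fst)
      (pullback.fst x (fStar.map prod.snd))
  let u : fStar.obj Y ⊗ X ⟶ pullback x (fStar.map (prod.snd : Y ⨯ B ⟶ B)) :=
    pullback.lift (CartesianMonoidalCategory.snd _ _)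
      (prod.lift (CartesianMonoidalCategory.fst _ _) (CartesianMonoidalCategory.snd _ _ ≫ x) ≫
        inv (Limits.prodComparison fStar Y B))
      (by rw [Category.assoc, Limits.inv_prodComparison_map_snd, prod.lift_snd])
  haveI hviso : IsIso v := by
    refine ⟨u, ?_, ?_⟩
    · apply pullback.hom_ext
      · simp [u, v]
      · rw [← cancel_mono (Limits.prodComparison fStar Y B)]
        apply Limits.prod.hom_ext
        · simp [u, v]
        · simp [u, v, pullback.condition]
    · apply CartesianMonoidalCategory.hom_ext <;> simp [u, v, Limits.inv_prodComparison_map_fst]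
  let m : Y ⊗ fShriek.obj X ⟶ pullback g (prod.snd : Y ⨯ B ⟶ B) :=
    pullback.lift (CartesianMonoidalCategory.snd _ _)
      (prod.lift (CartesianMonoidalCategory.fst _ _) (CartesianMonoidalCategory.snd _ _ ≫ g)) (by simp)
  let n : pullback g (prod.snd : Y ⨯ B ⟶ B) ⟶ Y ⊗ fShriek.obj X :=
    CartesianMonoidalCategory.lift (pullback.snd g prod.snd ≫ prod.fst) (pullback.fst g prod.snd)
  haveI hmiso : IsIso m := by
    refine ⟨n, ?_, ?_⟩
    · apply CartesianMonoidalCategory.hom_ext <;> simp [m, n]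
    · apply pullback.hom_ext
      · simp [m, n]
      · apply Limits.prod.hom_ext
        · simp [m, n]
        · simp [m, n, pullback.condition]
  have hnat1 := adj₁.counit.naturality (prod.fst : Y ⨯ B ⟶ Y)
  have hnat2 := adj₁.counit.naturality (prod.snd : Y ⨯ B ⟶ B)
  simp only [Functor.comp_map, Functor.id_map] at hnat1 hnat2
  have hθ : thetaMap fShriek fStar adj₁ (prod.snd : Y ⨯ B ⟶ B) X x =
      fShriek.map v ≫ φ ≫ m := by
    apply pullback.hom_ext
    · simp only [thetaMap, m, φ, g, frobeniusMorphism]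
      simp
      rw [← Functor.map_comp, CartesianMonoidalCategory.lift_snd]
    · apply Limits.prod.hom_ext
      · simp only [thetaMap, m, φ, g, frobeniusMorphism]
        simp
        rw [← hnat1, ← Functor.map_comp_assoc, ← Functor.map_comp_assoc,
          CartesianMonoidalCategory.lift_fst]
      · simp [thetaMap, m, φ, g, frobeniusMorphism]
        rw [← hnat2, ← Functor.map_comp_assoc, ← Functor.map_comp_assoc,
          CartesianMonoidalCategory.lift_snd, ← pullback.condition, Adjunction.homEquiv_counit, ← Functor.map_comp_assoc]
  rw [hθ]
  infer_instance
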